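/- Let n be a natural number and let μ be a partition of n labelling a conjugacy class of odd permutations. Then s_μ lies in the ideal of the subalgebra A (the ℚ-subalgebra of ℚ[S_n] generated by {s_i : 1 ≤ i ≤ supp(μ)}) generated, as an ideal of A, by the even cycle sums {s_{2j} : 2 ≤ 2j ≤ supp(μ)}. Equivalently, s_μ can be expressed as a polynomial over ℚ in the cycle sums s_i with i ≤ supp(μ) in such a way that every monomial in the expression contains at least one factor s_{2j} with 2j even. -/

import Mathlib

/-- `classSum n m` is the sum, in the group algebra `ℚ[Sₙ]`, of all permutations
whose cycle type is the multiset `m` (parts of size 1 being suppressed, as in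
Mathlib's `Equiv.Perm.cycleType`). -/
noncomputable def classSum (n : ℕ) (m : Multiset ℕ) : MonoidAlgebra ℚ (Equiv.Perm (Fin n)) :=
  ∑ σ ∈ Finset.univ.filter (fun σ : Equiv.Perm (Fin n) => σ.cycleType = m),
    MonoidAlgebra.single σ (1 : ℚ)

/-- The cycle sum `sᵢ`: the sum of all `i`-cycles in `Sₙ` for `i ≥ 2`, and the
identity of `ℚ[Sₙ]` for `i ≤ 1`. -/
noncomputable def cycleSum (n i : ℕ) : MonoidAlgebra ℚ (Equiv.Perm (Fin n)) :=
  if i < 2 then 1 else classSum n {i}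

/-- The support of a partition `μ` of `n`: the sum of the parts of size at
least 2, i.e. `n` minus the number of parts equal to 1. -/
def Nat.Partition.supp {n : ℕ} (μ : n.Partition) : ℕ :=
  (μ.parts.filter (2 ≤ ·)).sum


open Equiv MonoidAlgebra Finset

variable {n : ℕ}

abbrev R (n : ℕ) := MonoidAlgebra ℚ (Equiv.Perm (Fin n))

instance (n : ℕ) : CoeFun (R n) (fun _ => Equiv.Perm (Fin n) → ℚ) := ⟨fun x => x.coeff⟩

theorem classSum_apply (m : Multiset ℕ) (σ : Equiv.Perm (Fin n)) :
    classSum n m σ = if σ.cycleType = m then 1 else 0 := by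
  classical
  rw [classSum, MonoidAlgebra.coeff_sum, Finset.sum_apply']
  simp [MonoidAlgebra.single_apply, Finsupp.single_apply, Finset.sum_ite_eq]

theorem mul_apply' (f g : R n) (x : Equiv.Perm (Fin n)) :
    (f * g) x = ∑ a : Equiv.Perm (Fin n), f a * g (a⁻¹ * x) := by
  rw [MonoidAlgebra.mul_apply_left, Finsupp.sum]
  rw [Finset.sum_subset (Finset.subset_univ _)]
  intro a _ ha
  rw [Finsupp.notMem_support_iff] at ha
  simp [ha]

theorem classSum_central (m : Multiset ℕ) :
    classSum n m ∈ Subalgebra.center ℚ (R n) := by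
  rw [Subalgebra.mem_center_iff]
  intro x
  ext g
  rw [mul_apply', mul_apply']
  apply Fintype.sum_equiv ((Equiv.inv (Equiv.Perm (Fin n))).trans (Equiv.mulLeft g))
  intro a
  simp only [Equiv.trans_apply, Equiv.inv_apply, Equiv.coe_mulLeft]
  have h1 : (g * a⁻¹)⁻¹ * g = a := by group
  have h2 : classSum n m (g * a⁻¹) = classSum n m (a⁻¹ * g) := by
    rw [classSum_apply, classSum_apply]
    have : (a⁻¹ * (g * a⁻¹) * a⁻¹⁻¹).cycleType = (g * a⁻¹).cycleType :=
      Equiv.Perm.cycleType_conj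
    rw [show a⁻¹ * (g * a⁻¹) * a⁻¹⁻¹ = a⁻¹ * g by group] at this
    rw [this]
  rw [h1, h2]
  ring

theorem central_class_constant {x : R n} (hx : x ∈ Subalgebra.center ℚ (R n))
    {σ τ : Equiv.Perm (Fin n)} (h : σ.cycleType = τ.cycleType) : x σ = x τ := by
  rw [Subalgebra.mem_center_iff] at hx
  obtain ⟨c, hc⟩ := Equiv.Perm.isConj_iff_cycleType_eq.2 h
  rw [SemiconjBy] at hc
  set u : Equiv.Perm (Fin n) := ↑c with hu
  have this1 := hx (MonoidAlgebra.single u 1)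
  have h1 := congrArg (fun y : R n => y (u * σ)) this1
  rw [MonoidAlgebra.single_mul_apply, MonoidAlgebra.mul_single_apply] at h1
  rw [inv_mul_cancel_left] at h1
  rw [show u * σ * u⁻¹ = τ by rw [hc]; group] at h1
  simpa using h1

def Nonneg (x : R n) : Prop := ∀ g, 0 ≤ x g

theorem nonneg_classSum (m : Multiset ℕ) : Nonneg (classSum n m) := by
  intro g
  rw [classSum_apply]
  split <;> norm_num

theorem nonneg_one : Nonneg (1 : R n) := by
  intro g
  rw [MonoidAlgebra.one_def, MonoidAlgebra.single_apply]
  split <;> norm_num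

theorem nonneg_mul {f g : R n} (hf : Nonneg f) (hg : Nonneg g) : Nonneg (f * g) := by
  intro x
  rw [mul_apply']
  exact Finset.sum_nonneg fun a _ => mul_nonneg (hf a) (hg _)

theorem mul_coeff_le {f g : R n} (hf : Nonneg f) (hg : Nonneg g)
    (a b : Equiv.Perm (Fin n)) : f a * g b ≤ (f * g) (a * b) := by
  rw [mul_apply']
  have : f a * g b = f a * g (a⁻¹ * (a * b)) := by rw [inv_mul_cancel_left]
  rw [this]
  exact Finset.single_le_sum (fun c _ => mul_nonneg (hf c) (hg _)) (Finset.mem_univ a)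

theorem mul_coeff_ne_zero {f g : R n} {x : Equiv.Perm (Fin n)} (h : (f * g) x ≠ 0) :
    ∃ a, f a ≠ 0 ∧ g (a⁻¹ * x) ≠ 0 := by
  by_contra hc
  push_neg at hc
  apply h
  rw [mul_apply']
  apply Finset.sum_eq_zero
  intro a _
  by_cases ha : f a = 0
  · rw [ha, zero_mul]
  · rw [hc a ha, mul_zero]

noncomputable def prodCS (n : ℕ) (l : List ℕ) : R n :=
  (l.map (fun i => classSum n {i})).prod

theorem prodCS_nil : prodCS n [] = 1 := by simp [prodCS]

theorem prodCS_cons (i : ℕ) (l : List ℕ) :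
    prodCS n (i :: l) = classSum n {i} * prodCS n l := by
  simp [prodCS]

theorem nonneg_prodCS (l : List ℕ) : Nonneg (prodCS n l) := by
  induction l with
  | nil => rw [prodCS_nil]; exact nonneg_one
  | cons i m ih => rw [prodCS_cons]; exact nonneg_mul (nonneg_classSum _) ih

theorem prodCS_central (l : List ℕ) : prodCS n l ∈ Subalgebra.center ℚ (R n) := by
  induction l with
  | nil => rw [prodCS_nil]; exact one_mem _
  | cons i m ih => rw [prodCS_cons]; exact mul_mem (classSum_central _) ih

theorem one_coeff_ne_zero {g : Equiv.Perm (Fin n)} (h : (1 : R n) g ≠ 0) : g = 1 := by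
  by_contra hg
  apply h
  rw [MonoidAlgebra.one_def, MonoidAlgebra.single_apply, if_neg (fun he => hg he.symm)]

theorem prodCS_support (l : List ℕ) (g : Equiv.Perm (Fin n)) (h : prodCS n l g ≠ 0) :
    g.support.card ≤ l.sum ∧ Equiv.Perm.sign g = (-1) ^ (l.sum + l.length) := by
  induction l generalizing g with
  | nil =>
    rw [prodCS_nil] at h
    rw [one_coeff_ne_zero h]
    simp
  | cons i l ih =>
    rw [prodCS_cons] at h
    obtain ⟨a, ha, hb⟩ := mul_coeff_ne_zero h
    rw [classSum_apply] at ha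
    set b := a⁻¹ * g with hbdef
    have hct : a.cycleType = {i} := by by_contra hc; rw [if_neg hc] at ha; exact ha rfl
    have hcard : a.support.card = i := by
      rw [← Equiv.Perm.sum_cycleType, hct, Multiset.sum_singleton]
    have hsign : Equiv.Perm.sign a = (-1) ^ (i + 1) := by
      rw [Equiv.Perm.sign_of_cycleType, hct]; simp
    obtain ⟨hcard2, hsign2⟩ := ih b hb
    have hg : g = a * b := by rw [hbdef]; group
    constructor
    · calc g.support.card ≤ (a.support ∪ b.support).card := by
            rw [hg]; exact Finset.card_le_card (Equiv.Perm.support_mul_le a b)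
        _ ≤ a.support.card + b.support.card := Finset.card_union_le _ _
        _ ≤ i + l.sum := by rw [hcard]; exact Nat.add_le_add_left hcard2 i
        _ = (i :: l).sum := by simp
    · rw [hg, map_mul, hsign, hsign2]
      rw [← pow_add]
      rw [show i + 1 + (l.sum + l.length) = (i :: l).sum + (i :: l).length by simp; ring]

theorem prodCS_top (l : List ℕ) (g : Equiv.Perm (Fin n)) (h : prodCS n l g ≠ 0)
    (hc : g.support.card = l.sum) : g.cycleType = ↑l := by
  induction l generalizing g with
  | nil =>
    rw [prodCS_nil] at h
    rw [one_coeff_ne_zero h]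
    simp
  | cons i l ih =>
    rw [prodCS_cons] at h
    obtain ⟨a, ha, hb⟩ := mul_coeff_ne_zero h
    rw [classSum_apply] at ha
    set b := a⁻¹ * g with hbdef
    have hct : a.cycleType = {i} := by by_contra hcc; rw [if_neg hcc] at ha; exact ha rfl
    have hcard : a.support.card = i := by
      rw [← Equiv.Perm.sum_cycleType, hct, Multiset.sum_singleton]
    have hcard2 := (prodCS_support l _ hb).1
    have hg : g = a * b := by rw [hbdef]; group
    have hsub : g.support ⊆ a.support ∪ b.support := by
      rw [hg]; exact Equiv.Perm.support_mul_le a b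
    have hsum : (i :: l).sum = i + l.sum := by simp
    have h1 : (a.support ∪ b.support).card ≤ a.support.card + b.support.card :=
      Finset.card_union_le _ _
    have h2 : g.support.card ≤ (a.support ∪ b.support).card := Finset.card_le_card hsub
    have hbcard : b.support.card = l.sum := by omega
    have hdisj : Disjoint a.support b.support := by
      rw [← Finset.card_union_eq_card_add_card]
      omega
    have hpd : a.Disjoint b := Equiv.Perm.disjoint_iff_disjoint_support.2 hdisj
    rw [hg, Equiv.Perm.Disjoint.cycleType_mul hpd, hct, ih _ hb hbcard]
    simp [Multiset.singleton_add]

theorem prodCS_perm {l l' : List ℕ} (h : l.Perm l') : prodCS n l = prodCS n l' := by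
  apply List.Perm.prod_eq'
  · exact h.map _
  · apply List.pairwise_of_forall_mem_list
    intro x hx y hy
    simp only [List.mem_map] at hx
    obtain ⟨i, _, rfl⟩ := hx
    exact (Subalgebra.mem_center_iff.1 (classSum_central {i}) y).symm

theorem one_le_prodCS_self (σ : Equiv.Perm (Fin n)) :
    1 ≤ prodCS n σ.cycleType.toList σ := by
  induction σ using Equiv.Perm.cycle_induction_on with
  | base_one =>
    have h : (1 : Equiv.Perm (Fin n)).cycleType = 0 := Equiv.Perm.cycleType_one
    rw [show (1 : Equiv.Perm (Fin n)).cycleType.toList = [] by rw [h]; exact Multiset.toList_zero]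
    rw [prodCS_nil, MonoidAlgebra.one_def, MonoidAlgebra.single_apply]
    simp
  | base_cycles σ hσ =>
    have h : σ.cycleType = {σ.support.card} := hσ.cycleType
    have hl : σ.cycleType.toList.Perm [σ.support.card] := by
      rw [← Multiset.coe_eq_coe, Multiset.coe_toList, h]
      rfl
    rw [prodCS_perm hl, prodCS_cons, prodCS_nil, mul_one, classSum_apply, h]; norm_num
  | induction_disjoint σ τ hd hσ _ ih =>
    have h : (σ * τ).cycleType = σ.support.card ::ₘ τ.cycleType := by
      rw [Equiv.Perm.Disjoint.cycleType_mul hd, hσ.cycleType]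
      rfl
    have hl : (σ * τ).cycleType.toList.Perm (σ.support.card :: τ.cycleType.toList) := by
      rw [← Multiset.coe_eq_coe, Multiset.coe_toList, h, ← Multiset.cons_coe,
        Multiset.coe_toList]
    rw [prodCS_perm hl, prodCS_cons]
    calc (1 : ℚ) = 1 * 1 := by norm_num
      _ ≤ classSum n {σ.support.card} σ * prodCS n τ.cycleType.toList τ := by
          apply mul_le_mul
          · rw [classSum_apply, hσ.cycleType]; norm_num
          · exact ih
          · norm_num
          · rw [classSum_apply, hσ.cycleType]; norm_num
      _ ≤ (classSum n {σ.support.card} * prodCS n τ.cycleType.toList) (σ * τ) :=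
          mul_coeff_le (nonneg_classSum _) (nonneg_prodCS _) σ τ

theorem expand_single (x : R n) :
    x = ∑ σ : Equiv.Perm (Fin n), MonoidAlgebra.single σ (x σ) := by
  ext g
  rw [MonoidAlgebra.coeff_sum, Finset.sum_apply']
  rw [Finset.sum_eq_single g (fun b _ hb => by
    rw [MonoidAlgebra.single_apply, if_neg hb]) (fun h => absurd (Finset.mem_univ g) h)]
  rw [MonoidAlgebra.single_apply, if_pos rfl]

theorem central_decomp {x : R n} (hx : x ∈ Subalgebra.center ℚ (R n)) :
    ∃ cval : Multiset ℕ → ℚ,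
      (x = ∑ ν ∈ Finset.image Equiv.Perm.cycleType (Finset.univ : Finset (Equiv.Perm (Fin n))),
          cval ν • classSum n ν) ∧
      (∀ ν, cval ν ≠ 0 → ∃ g : Equiv.Perm (Fin n), x g ≠ 0 ∧ g.cycleType = ν) := by
  classical
  refine ⟨fun ν => if h : ∃ σ : Equiv.Perm (Fin n), σ.cycleType = ν then x h.choose else 0,
    ?_, ?_⟩
  · set cval := fun ν => if h : ∃ σ : Equiv.Perm (Fin n), σ.cycleType = ν
      then x h.choose else 0 with hcval
    have key : ∀ σ : Equiv.Perm (Fin n), x σ = cval σ.cycleType := by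
      intro σ
      have h : ∃ τ : Equiv.Perm (Fin n), τ.cycleType = σ.cycleType := ⟨σ, rfl⟩
      rw [hcval]
      simp only [dif_pos h]
      exact central_class_constant hx h.choose_spec.symm
    conv_lhs => rw [expand_single x]
    rw [← Finset.sum_fiberwise_of_maps_to
      (fun σ _ => Finset.mem_image_of_mem Equiv.Perm.cycleType (Finset.mem_univ σ))
      (fun σ => MonoidAlgebra.single σ (x σ))]
    apply Finset.sum_congr rfl
    intro ν _
    rw [classSum, Finset.smul_sum]
    apply Finset.sum_congr rfl
    intro σ hσ
    rw [Finset.mem_filter] at hσ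
    rw [key σ, hσ.2, MonoidAlgebra.smul_single', mul_one]
  · intro ν hν
    rw [ne_eq, dite_eq_right_iff, not_forall] at hν
    obtain ⟨h, hx0⟩ := hν
    exact ⟨h.choose, hx0, h.choose_spec⟩

theorem all_odd_even_sum (m : Multiset ℕ) (h : ∀ i ∈ m, ¬ Even i) :
    Even (m.sum + Multiset.card m) := by
  induction m using Multiset.induction_on with
  | empty => simp
  | cons a s ih =>
    have ha : ¬ Even a := h a (Multiset.mem_cons_self a s)
    obtain ⟨b, hb⟩ := Nat.not_even_iff_odd.1 ha
    obtain ⟨cc, hcc⟩ := ih (fun i hi => h i (Multiset.mem_cons_of_mem hi))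
    rw [Multiset.sum_cons, Multiset.card_cons]
    exact ⟨cc + b + 1, by omega⟩


/-- Let `μ` be a partition of `n` labelling a conjugacy class
of odd permutations, and let `A` be the ℚ-subalgebra of `ℚ[Sₙ]` generated by
the cycle sums `sᵢ` for `1 ≤ i ≤ supp μ`.  Then `s_μ` lies in `A`, and, as an
element of `A`, it lies in the ideal of `A` generated by the even cycle sums
`s_{2j}` with `2 ≤ 2j ≤ supp μ`.  (Equivalently, `s_μ` is a polynomial over ℚ
in the `sᵢ`, `i ≤ supp μ`, each of whose monomials contains a factor
`s_{2j}`.) -/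
theorem classSum_of_odd_class_mem_even_ideal (n : ℕ) (μ : n.Partition)
    (hodd : ∀ σ : Equiv.Perm (Fin n),
      σ.cycleType = μ.parts.filter (2 ≤ ·) → Equiv.Perm.sign σ = -1) :
    ∃ h : classSum n (μ.parts.filter (2 ≤ ·)) ∈
        Algebra.adjoin ℚ {x : MonoidAlgebra ℚ (Equiv.Perm (Fin n)) |
          ∃ i, 1 ≤ i ∧ i ≤ μ.supp ∧ x = cycleSum n i},
      (⟨classSum n (μ.parts.filter (2 ≤ ·)), h⟩ :
          Algebra.adjoin ℚ {x : MonoidAlgebra ℚ (Equiv.Perm (Fin n)) |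
            ∃ i, 1 ≤ i ∧ i ≤ μ.supp ∧ x = cycleSum n i}) ∈
        Ideal.span {x : Algebra.adjoin ℚ {x : MonoidAlgebra ℚ (Equiv.Perm (Fin n)) |
            ∃ i, 1 ≤ i ∧ i ≤ μ.supp ∧ x = cycleSum n i} |
          ∃ j, 1 ≤ j ∧ 2 * j ≤ μ.supp ∧
            (x : MonoidAlgebra ℚ (Equiv.Perm (Fin n))) = cycleSum n (2 * j)} := by
  classical
  set S : Set (R n) := {x : R n | ∃ i, 1 ≤ i ∧ i ≤ μ.supp ∧ x = cycleSum n i} with hS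
  set A := Algebra.adjoin ℚ S with hA
  set T : Set A := {x : A | ∃ j, 1 ≤ j ∧ 2 * j ≤ μ.supp ∧
      (x : R n) = cycleSum n (2 * j)} with hT
  set M : Submodule ℚ (R n) :=
    Submodule.map (A.val.toLinearMap) ((Ideal.span T).restrictScalars ℚ) with hM
  -- membership in A for classSums of singletons
  have hcsA : ∀ i, 2 ≤ i → i ≤ μ.supp → classSum n {i} ∈ A := by
    intro i h2 hle
    apply Algebra.subset_adjoin
    exact ⟨i, by omega, hle, by rw [cycleSum, if_neg (by omega)]⟩
  have hprodA : ∀ l : List ℕ, (∀ j ∈ l, 2 ≤ j ∧ j ≤ μ.supp) → prodCS n l ∈ A := by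
    intro l hl
    induction l with
    | nil => rw [prodCS_nil]; exact one_mem A
    | cons j l ih =>
      rw [prodCS_cons]
      exact mul_mem (hcsA j (hl j (by simp)).1 (hl j (by simp)).2)
        (ih (fun i hi => hl i (by simp [hi])))
  -- key closure fact : x * gen ∈ M
  have hmulM : ∀ (x : R n) (hx : x ∈ A) (j : ℕ), 1 ≤ j → 2 * j ≤ μ.supp →
      x * classSum n {2 * j} ∈ M := by
    intro x hx j hj1 hj2
    have hgA : classSum n {2 * j} ∈ A := hcsA (2 * j) (by omega) hj2
    have hgT : (⟨classSum n {2 * j}, hgA⟩ : A) ∈ T :=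
      ⟨j, hj1, hj2, by rw [cycleSum, if_neg (by omega)]⟩
    refine ⟨⟨x, hx⟩ * ⟨classSum n {2 * j}, hgA⟩, ?_, rfl⟩
    exact Ideal.mul_mem_left _ _ (Ideal.subset_span hgT)
  -- main induction
  have key : ∀ k : ℕ, ∀ m : Multiset ℕ, m.sum ≤ k → (∀ i ∈ m, 2 ≤ i) → m.sum ≤ μ.supp →
      (∀ σ : Equiv.Perm (Fin n), σ.cycleType = m → Equiv.Perm.sign σ = -1) →
      classSum n m ∈ M := by
    intro k
    induction k using Nat.strong_induction_on with
    | _ k ih =>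
      intro m hmk hm2 hms hmsign
      by_cases hex : ∃ σ0 : Equiv.Perm (Fin n), σ0.cycleType = m
      · obtain ⟨σ0, hσ0⟩ := hex
        -- even part
        have hsgn0 : Equiv.Perm.sign σ0 = -1 := hmsign σ0 hσ0
        have hoddsum : ¬ Even (m.sum + Multiset.card m) := by
          intro hev
          rw [Equiv.Perm.sign_of_cycleType, hσ0, Even.neg_one_pow hev] at hsgn0
          exact absurd hsgn0 (by decide)
        have hev : ∃ i ∈ m, Even i := by
          by_contra hno
          push_neg at hno
          exact hoddsum (all_odd_even_sum m hno)
        obtain ⟨i, him, hieven⟩ := hev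
        have h2i : 2 ≤ i := hm2 i him
        set l := m.toList with hldef
        have hlm : (↑l : Multiset ℕ) = m := Multiset.coe_toList m
        have hlsum : l.sum = m.sum := by rw [← Multiset.sum_coe, hlm]
        have hllen : l.length = Multiset.card m := by rw [← Multiset.coe_card, hlm]
        set P := prodCS n l with hPdef
        have hPsupp : ∀ g : Equiv.Perm (Fin n), P g ≠ 0 →
            g.support.card ≤ m.sum ∧ Equiv.Perm.sign g = -1 := by
          intro g hg
          obtain ⟨h1, h2⟩ := prodCS_support l g hg
          refine ⟨hlsum ▸ h1, ?_⟩
          have hs0 : Equiv.Perm.sign σ0 = (-1 : ℤˣ) ^ (m.sum + Multiset.card m) := by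
            rw [Equiv.Perm.sign_of_cycleType, hσ0]
          rw [h2, hlsum, hllen, ← hs0]
          exact hsgn0
        have hc1 : 1 ≤ P σ0 := by
          have hperm : σ0.cycleType.toList.Perm l := by
            rw [← Multiset.coe_eq_coe, Multiset.coe_toList, hlm, hσ0]
          rw [hPdef, ← prodCS_perm hperm]
          exact one_le_prodCS_self σ0
        set c := P σ0 with hcdef
        have hcne : c ≠ 0 := by positivity
        have hPclass : ∀ g : Equiv.Perm (Fin n), g.cycleType = m → P g = c :=
          fun g hg => central_class_constant (prodCS_central l) (by rw [hg, hσ0])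
        set D := P - c • classSum n m with hDdef
        have hDval : ∀ g, D g = P g - c * classSum n m g := by
          intro g
          rw [hDdef, MonoidAlgebra.coeff_sub, Finsupp.sub_apply, MonoidAlgebra.coeff_smul, Finsupp.smul_apply, smul_eq_mul]
        have hDcentral : D ∈ Subalgebra.center ℚ (R n) :=
          sub_mem (prodCS_central l) (SMulMemClass.smul_mem c (classSum_central m))
        obtain ⟨cval, hDeq, hDsupp⟩ := central_decomp hDcentral
        -- D ∈ M by induction
        have hDM : D ∈ M := by
          rw [hDeq]
          apply Submodule.sum_mem
          intro ν _
          by_cases hν : cval ν = 0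
          · rw [hν, zero_smul]; exact zero_mem M
          · apply Submodule.smul_mem
            obtain ⟨g, hgD, rfl⟩ := hDsupp ν hν
            have hgm : g.cycleType ≠ m := by
              intro hgm
              apply hgD
              rw [hDval, hPclass g hgm, classSum_apply, if_pos hgm, mul_one, sub_self]
            have hPg : P g ≠ 0 := by
              intro hPg
              apply hgD
              rw [hDval, hPg, classSum_apply, if_neg hgm, mul_zero, sub_zero]
            obtain ⟨hgcard, hgsign⟩ := hPsupp g hPg
            have hlt : g.support.card < m.sum := by
              rcases lt_or_eq_of_le hgcard with h | h
              · exact h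
              · exact absurd (prodCS_top l g hPg (by rw [hlsum, h]) |>.trans hlm) hgm
            have hsum : g.cycleType.sum = g.support.card := Equiv.Perm.sum_cycleType g
            apply ih g.cycleType.sum (by omega) g.cycleType (le_refl _)
              (fun j hj => Equiv.Perm.two_le_of_mem_cycleType hj) (by omega)
            intro τ hτ
            rw [Equiv.Perm.sign_of_cycleType, hτ, ← Equiv.Perm.sign_of_cycleType g, hgsign]
        -- P ∈ M
        have hPM : P ∈ M := by
          obtain ⟨j, rfl⟩ := hieven
          have hji : j + j = 2 * j := by ring
          set l' := (m.erase (2 * j)).toList with hl'def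
          have hperm : l.Perm (2 * j :: l') := by
            rw [← Multiset.coe_eq_coe, hlm, ← Multiset.cons_coe, Multiset.coe_toList]
            rw [Multiset.cons_erase (hji ▸ him)]
          have hrest : prodCS n l' ∈ A := by
            apply hprodA
            intro x hx
            have hxm : x ∈ m := Multiset.mem_of_mem_erase (Multiset.mem_toList.1 hx)
            exact ⟨hm2 x hxm,
              le_trans (Multiset.single_le_sum (fun y _ => Nat.zero_le y) _ hxm) hms⟩
          have hPeq : P = prodCS n l' * classSum n {2 * j} := by
            rw [hPdef, prodCS_perm hperm, prodCS_cons]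
            exact (Subalgebra.mem_center_iff.1 (classSum_central {2 * j}) _).symm
          rw [hPeq]
          have hjs : j + j ≤ μ.supp :=
            le_trans (Multiset.single_le_sum (fun x _ => Nat.zero_le x) _ him) hms
          apply hmulM _ hrest j ?_ ?_ <;> omega
        -- conclude
        have hfinal : classSum n m = c⁻¹ • (P - D) := by
          rw [hDdef]
          rw [sub_sub_cancel, smul_smul, inv_mul_cancel₀ hcne, one_smul]
        rw [hfinal]
        exact Submodule.smul_mem M _ (Submodule.sub_mem M hPM hDM)
      · -- empty class
        have : classSum n m = 0 := by
          ext g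
          rw [classSum_apply, if_neg (fun h => hex ⟨g, h⟩)]
          rfl
        rw [this]
        exact zero_mem M
  -- apply key
  have hm0 : (μ.parts.filter (2 ≤ ·)).sum = μ.supp := rfl
  have hmem := key (μ.parts.filter (2 ≤ ·)).sum (μ.parts.filter (2 ≤ ·)) le_rfl
    (fun i hi => (Multiset.mem_filter.1 hi).2) (le_of_eq hm0) hodd
  obtain ⟨⟨yv, yA⟩, hyI, hyx⟩ := hmem
  simp only [Subalgebra.coe_val, AlgHom.toLinearMap_apply] at hyx
  subst hyx
  exact ⟨yA, hyI⟩
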